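/- Let G be the Kaluza-Klein metric on an open set of ℝ³ with G_{αβ} = h_{αβ} + ε φ_α φ_β, G_{α2} = ε φ_α, G_{22} = ε, where h and φ are independent of x². Then the Christoffel symbols of G with mixed base indices satisfy Γ^δ_{2β} = (ε/2) h^{δζ} f_{βζ}, where f_{αβ} := ∂_α φ_β − ∂_β φ_α and h^{δζ} denotes the inverse of h. -/

import Mathlib

open Matrix

/-- Partial derivative in coordinate direction `μ` on ℝ³. -/
noncomputable def pd (μ : Fin 3) (F : (Fin 3 → ℝ) → ℝ) (x : Fin 3 → ℝ) : ℝ :=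
  fderiv ℝ F x (Pi.single μ 1)

/-- The Kaluza-Klein metric `G` with `G_{αβ} = h_{αβ} + ε φ_α φ_β`,
`G_{α2} = G_{2α} = ε φ_α`, `G_{22} = ε`. -/
noncomputable def KK (ε : ℝ) (h : Matrix (Fin 2) (Fin 2) ℝ) (φ : Fin 2 → ℝ) :
    Matrix (Fin 3) (Fin 3) ℝ :=
  Matrix.of fun μ ν =>
    if hμ : (μ : ℕ) < 2 then
      if hν : (ν : ℕ) < 2 then h ⟨(μ : ℕ), hμ⟩ ⟨(ν : ℕ), hν⟩ + ε * φ ⟨(μ : ℕ), hμ⟩ * φ ⟨(ν : ℕ), hν⟩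
      else ε * φ ⟨(μ : ℕ), hμ⟩
    else if hν : (ν : ℕ) < 2 then ε * φ ⟨(ν : ℕ), hν⟩ else ε

/-- Christoffel symbols `Γ^λ_{μν} = (1/2) G^{λρ}(∂_ν G_{ρμ} + ∂_μ G_{ρν} − ∂_ρ G_{μν})`. -/
noncomputable def chris (G : (Fin 3 → ℝ) → Matrix (Fin 3) (Fin 3) ℝ)
    (x : Fin 3 → ℝ) (l μ ν : Fin 3) : ℝ :=
  (1/2) * ∑ ρ, (G x)⁻¹ l ρ *
    (pd ν (fun y => G y ρ μ) x + pd μ (fun y => G y ρ ν) x - pd ρ (fun y => G y μ ν) x)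

/-- Abelian field strength `f_{αβ} = ∂_α φ_β − ∂_β φ_α` (base indices). -/
noncomputable def fs (φf : (Fin 3 → ℝ) → Fin 2 → ℝ) (x : Fin 3 → ℝ) (α β : Fin 2) : ℝ :=
  pd α.castSucc (fun y => φf y β) x - pd β.castSucc (fun y => φf y α) x

/-- Christoffel symbols `γ^δ_{αβ}` of the base metric `h`. -/
noncomputable def gam (hm : (Fin 3 → ℝ) → Matrix (Fin 2) (Fin 2) ℝ)
    (x : Fin 3 → ℝ) (δ α β : Fin 2) : ℝ :=
  (1/2) * ∑ ζ, (hm x)⁻¹ δ ζ *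
    (pd β.castSucc (fun y => hm y ζ α) x + pd α.castSucc (fun y => hm y ζ β) x
      - pd ζ.castSucc (fun y => hm y α β) x)

/- ## Auxiliary material -/

lemma pd2_zero (F : (Fin 3 → ℝ) → ℝ) (hF : Differentiable ℝ F)
    (hind : ∀ x t, F (Function.update x 2 t) = F x) (x : Fin 3 → ℝ) :
    pd 2 F x = 0 := by
  have hc : (fun t : ℝ => Function.update x 2 t)
      = fun t : ℝ => x + (t - x 2) • (Pi.single 2 1 : Fin 3 → ℝ) := by
    funext t i
    by_cases hi : i = 2
    · subst hi; simp
    · simp [Function.update_of_ne hi, Pi.single_eq_of_ne hi]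
  have hder : HasDerivAt (fun t : ℝ => Function.update x 2 t)
      ((Pi.single 2 1 : Fin 3 → ℝ)) (x 2) := by
    rw [hc]
    have : HasDerivAt (fun t : ℝ => x + (t - x 2) • (Pi.single 2 1 : Fin 3 → ℝ))
        ((1 : ℝ) • (Pi.single 2 1 : Fin 3 → ℝ)) (x 2) :=
      (((hasDerivAt_id (x 2)).sub_const (x 2)).smul_const _).const_add x
    simpa using this
  have h1 : HasDerivAt (fun t : ℝ => F (Function.update x 2 t))
      (fderiv ℝ F x (Pi.single 2 1)) (x 2) := by
    have hx : Function.update x 2 (x 2) = x := Function.update_eq_self 2 x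
    have hF' : HasFDerivAt F (fderiv ℝ F x) (Function.update x 2 (x 2)) := by
      rw [hx]; exact (hF x).hasFDerivAt
    exact hF'.comp_hasDerivAt (x 2) hder
  have h2 : HasDerivAt (fun t : ℝ => F (Function.update x 2 t)) 0 (x 2) := by
    have : (fun t : ℝ => F (Function.update x 2 t)) = fun _ => F x := by
      funext t; exact hind x t
    rw [this]; exact hasDerivAt_const _ _
  have := h1.unique h2
  simpa [pd] using this

/-- Candidate inverse of the Kaluza–Klein metric (`k` stands for `h⁻¹`). -/
noncomputable def Mk (ε : ℝ) (k : Matrix (Fin 2) (Fin 2) ℝ) (φ : Fin 2 → ℝ) :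
    Matrix (Fin 3) (Fin 3) ℝ :=
  !![k 0 0, k 0 1, -(k 0 0 * φ 0 + k 0 1 * φ 1);
     k 1 0, k 1 1, -(k 1 0 * φ 0 + k 1 1 * φ 1);
     -(φ 0 * k 0 0 + φ 1 * k 1 0), -(φ 0 * k 0 1 + φ 1 * k 1 1),
       1/ε + (φ 0 * (k 0 0 * φ 0 + k 0 1 * φ 1) + φ 1 * (k 1 0 * φ 0 + k 1 1 * φ 1))]

lemma KK_mul_Mk (ε : ℝ) (hε : ε ≠ 0) (H : Matrix (Fin 2) (Fin 2) ℝ) (φ : Fin 2 → ℝ)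
    (hH : IsUnit H.det) : KK ε H φ * Mk ε H⁻¹ φ = 1 := by
  have h1 : H * H⁻¹ = 1 := Matrix.mul_nonsing_inv H hH
  have e00 : H 0 0 * H⁻¹ 0 0 + H 0 1 * H⁻¹ 1 0 = 1 := by
    have := congrFun (congrFun h1 0) 0; simpa [Matrix.mul_apply, Fin.sum_univ_two] using this
  have e01 : H 0 0 * H⁻¹ 0 1 + H 0 1 * H⁻¹ 1 1 = 0 := by
    have := congrFun (congrFun h1 0) 1; simpa [Matrix.mul_apply, Fin.sum_univ_two] using this
  have e10 : H 1 0 * H⁻¹ 0 0 + H 1 1 * H⁻¹ 1 0 = 0 := by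
    have := congrFun (congrFun h1 1) 0; simpa [Matrix.mul_apply, Fin.sum_univ_two] using this
  have e11 : H 1 0 * H⁻¹ 0 1 + H 1 1 * H⁻¹ 1 1 = 1 := by
    have := congrFun (congrFun h1 1) 1; simpa [Matrix.mul_apply, Fin.sum_univ_two] using this
  have hiv : ε * ε⁻¹ = 1 := mul_inv_cancel₀ hε
  ext i j
  fin_cases i <;> fin_cases j <;>
    simp only [Matrix.mul_apply, Fin.sum_univ_three, KK, Mk, Matrix.one_apply,
      Matrix.of_apply, Matrix.cons_val', Matrix.cons_val_zero, Matrix.cons_val_one,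
      Matrix.head_cons, Matrix.empty_val', Matrix.cons_val_fin_one, Matrix.head_fin_const]
  · simpa using by linear_combination e00
  · simpa using by linear_combination e01
  · simpa using by linear_combination φ 0 * hiv - φ 0 * e00 - φ 1 * e01
  · simpa using by linear_combination e10
  · simpa using by linear_combination e11
  · simpa using by linear_combination φ 1 * hiv - φ 0 * e10 - φ 1 * e11
  · simpa using by linear_combination (0:ℝ) * e00
  · simpa using by linear_combination (0:ℝ) * e00
  · simpa using by linear_combination hiv

lemma KK_inv (ε : ℝ) (hε : ε ≠ 0) (H : Matrix (Fin 2) (Fin 2) ℝ) (φ : Fin 2 → ℝ)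
    (hH : IsUnit H.det) : (KK ε H φ)⁻¹ = Mk ε H⁻¹ φ :=
  Matrix.inv_eq_right_inv (KK_mul_Mk ε hε H φ hH)

section KKentries
variable {ε : ℝ} {H : Matrix (Fin 2) (Fin 2) ℝ} {φ : Fin 2 → ℝ}

lemma KK_0_2 : KK ε H φ 0 2 = ε * φ 0 := by simp [KK]
lemma KK_1_2 : KK ε H φ 1 2 = ε * φ 1 := by simp [KK]
lemma KK_2_2 : KK ε H φ 2 2 = ε := by simp [KK]
lemma KK_0_b (β : Fin 2) : KK ε H φ 0 β.castSucc = H 0 β + ε * φ 0 * φ β := by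
  simp [KK, Fin.isLt]
  exact fun h => absurd h (by have := β.isLt; omega)
lemma KK_1_b (β : Fin 2) : KK ε H φ 1 β.castSucc = H 1 β + ε * φ 1 * φ β := by
  simp [KK, Fin.isLt]
  exact fun h => absurd h (by have := β.isLt; omega)
lemma KK_2_b (β : Fin 2) : KK ε H φ 2 β.castSucc = ε * φ β := by
  simp [KK, Fin.isLt]
  exact fun h => absurd h (by have := β.isLt; omega)
lemma KK_b_2 (α : Fin 2) : KK ε H φ α.castSucc 2 = ε * φ α := by
  simp [KK, Fin.isLt]
  exact fun h => absurd h (by have := α.isLt; omega)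

end KKentries

/-- For the Kaluza-Klein metric (with h, φ independent of x²),
the mixed Christoffel symbols satisfy Γ^δ_{2β} = (ε/2) h^{δζ} f_{βζ}. -/
theorem stmt_2
    (ε : ℝ) (hε : 0 < ε)
    (hm : (Fin 3 → ℝ) → Matrix (Fin 2) (Fin 2) ℝ) (φf : (Fin 3 → ℝ) → Fin 2 → ℝ)
    (hsm : ∀ α β, ContDiff ℝ (⊤ : ℕ∞) fun x => hm x α β)
    (φsm : ∀ α, ContDiff ℝ (⊤ : ℕ∞) fun x => φf x α)
    (hinv : ∀ x, IsUnit (hm x).det)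
    (hind : ∀ x t, hm (Function.update x 2 t) = hm x)
    (φind : ∀ x t, φf (Function.update x 2 t) = φf x) :
    ∀ (x : Fin 3 → ℝ) (δ β : Fin 2),
      chris (fun y => KK ε (hm y) (φf y)) x δ.castSucc 2 β.castSucc =
        (ε / 2) * ∑ ζ, (hm x)⁻¹ δ ζ * fs φf x β ζ := by
  intro x δ β
  have hε' : ε ≠ 0 := ne_of_gt hε
  have dφ : ∀ ζ : Fin 2, Differentiable ℝ (fun y => φf y ζ) :=
    fun ζ => (φsm ζ).differentiable (by simp)
  have dh : ∀ α β : Fin 2, Differentiable ℝ (fun y => hm y α β) :=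
    fun α β => (hsm α β).differentiable (by simp)
  have A : ∀ (ζ : Fin 2) (ν : Fin 3),
      pd ν (fun y => ε * φf y ζ) x = ε * pd ν (fun y => φf y ζ) x := by
    intro ζ ν
    unfold pd
    rw [fderiv_const_mul (dφ ζ x)]
    simp
  have B : ∀ (ζ α : Fin 2),
      pd 2 (fun y => hm y ζ α + ε * φf y ζ * φf y α) x = 0 := by
    intro ζ α
    refine pd2_zero _ ((dh ζ α).add (((dφ ζ).const_mul ε).mul (dφ α))) ?_ x
    intro y t
    show hm (Function.update y 2 t) ζ α + ε * φf (Function.update y 2 t) ζ * φf (Function.update y 2 t) α = hm y ζ α + ε * φf y ζ * φf y α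
    simp only [hind y t, φind y t]
  have C : ∀ ν : Fin 3, pd ν (fun _ : Fin 3 → ℝ => ε) x = 0 := by
    intro ν; simp [pd]
  simp only [chris, KK_inv ε hε' (hm x) (φf x) (hinv x), Fin.sum_univ_three]
  simp only [KK_0_2, KK_1_2, KK_2_2, KK_0_b, KK_1_b, KK_2_b]
  simp only [A, B, C]
  simp only [fs, Fin.sum_univ_two, Fin.castSucc_zero, Fin.castSucc_one]
  fin_cases δ <;>
    simp only [Mk, Fin.castSucc, Fin.castAdd, Fin.castLE, Matrix.cons_val', Matrix.cons_val_zero,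
      Matrix.cons_val_one, Matrix.head_cons, Matrix.empty_val', Matrix.cons_val_fin_one,
      Matrix.head_fin_const, Fin.mk_zero, Fin.mk_one, Matrix.of_apply] <;>
    ring
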